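/- arXiv:1408.6509 — 3 statements merged into one kernel-verified Lean document; each statement's English description precedes it below -/
import Mathlib

section
/- Let G and H be groups and let f be an element of the free product G * H that is non-simple (not conjugate in G * H to any element of the canonical images of G or H). Then there exist elements a, b, c of G * H with ‖a‖ + ‖c‖ ≤ 2‖f‖ and 1 ≤ ‖b‖ ≤ ‖f‖ such that for every integer n ≥ 3 one has f^n = a · b^{n-2} · c and moreover ‖f^n‖ = ‖a‖ + (n-2)·‖b‖ + ‖c‖ (i.e., this factorization realizes the normal form of f^n). -/
open Monoid CoprodI CoprodI.Word List

set_option linter.unusedSectionVars false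

namespace FPAux

variable {ι : Type*} {M : ι → Type*} [∀ i, Group (M i)]

def P (l : List (Σ i, M i)) : CoprodI M := (l.map fun a => of a.2).prod

def Red (l : List (Σ i, M i)) : Prop :=
  (∀ a ∈ l, a.2 ≠ 1) ∧ (l.map Sigma.fst).Chain' Ne

def Link (l₁ l₂ : List (Σ i, M i)) : Prop :=
  ∀ p ∈ (l₁.map Sigma.fst).getLast?, ∀ q ∈ (l₂.map Sigma.fst).head?, p ≠ q

def toWord (l : List (Σ i, M i)) (h : Red l) : Word M :=
  ⟨l, h.1, (List.isChain_map _).mp h.2⟩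

lemma prod_toWord (l : List (Σ i, M i)) (h : Red l) : (toWord l h).prod = P l := rfl

lemma P_append (l₁ l₂ : List (Σ i, M i)) : P (l₁ ++ l₂) = P l₁ * P l₂ := by simp [P]

lemma P_nil : P ([] : List (Σ i, M i)) = 1 := rfl

lemma red_append {l₁ l₂ : List (Σ i, M i)} (h₁ : Red l₁) (h₂ : Red l₂) (h : Link l₁ l₂) :
    Red (l₁ ++ l₂) := by
  refine ⟨fun a ha => ?_, ?_⟩
  · rcases List.mem_append.mp ha with ha | ha
    exacts [h₁.1 a ha, h₂.1 a ha]
  · rw [List.Chain', List.map_append, List.isChain_append]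
    exact ⟨h₁.2, h₂.2, h⟩

/-- simple elements: conjugates of letters -/
def Simple (x : CoprodI M) : Prop := ∃ (u : CoprodI M) (i : ι) (g : M i), x = u⁻¹ * of g * u

lemma simple_one [Nonempty ι] : Simple (1 : CoprodI M) := by
  obtain ⟨i⟩ := ‹Nonempty ι›
  exact ⟨1, i, 1, by simp⟩

lemma simple_of (i : ι) (g : M i) : Simple (of g : CoprodI M) := ⟨1, i, g, by simp⟩

lemma simple_conj {x : CoprodI M} (u : CoprodI M) (h : Simple x) : Simple (u⁻¹ * x * u) := by
  obtain ⟨v, i, g, rfl⟩ := h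
  exact ⟨v * u, i, g, by simp [mul_assoc]⟩

/-- repeated word: rep w z k = w^k ++ z -/
def rep (w z : List (Σ i, M i)) : ℕ → List (Σ i, M i)
  | 0 => z
  | (k+1) => w ++ rep w z k

lemma link_append_right {v w l : List (Σ i, M i)} (hw : w ≠ []) (hvw : Link v w) :
    Link v (w ++ l) := by
  intro p hp q hq
  rw [List.map_append, List.head?_append_of_ne_nil _ (by simpa using hw)] at hq
  exact hvw p hp q hq

lemma rep_spec {v w z : List (Σ i, M i)} (hw : Red w) (hz : Red z) (hwne : w ≠ [])
    (hzne : z ≠ []) (hww : Link w w) (hwz : Link w z) (hvw : Link v w) (hvz : Link v z) :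
    ∀ k, Red (rep w z k) ∧ Link v (rep w z k) ∧ Link w (rep w z k) ∧
      (rep w z k).length = k * w.length + z.length ∧ P (rep w z k) = (P w) ^ k * P z := by
  intro k
  induction k with
  | zero => exact ⟨hz, hvz, hwz, by simp [rep], by simp [rep]⟩
  | succ k ih =>
    obtain ⟨hred, hv, hwk, hlen, hP⟩ := ih
    refine ⟨red_append hw hred hwk, link_append_right hwne hvw, link_append_right hwne hww,
      ?_, ?_⟩
    · simp [rep, hlen]; ring
    · rw [rep, P_append, hP, pow_succ']
      group


section WithDec

variable [DecidableEq ι] [∀ i, DecidableEq (M i)]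

noncomputable def wlen (x : CoprodI M) : ℕ := (Word.equiv x).toList.length

lemma equiv_prod (w : Word M) : Word.equiv w.prod = w := Word.equiv.apply_symm_apply w

lemma equiv_P {l : List (Σ i, M i)} (h : Red l) : (Word.equiv (P l)).toList = l := by
  rw [← prod_toWord l h, equiv_prod]; rfl

lemma wlen_P {l : List (Σ i, M i)} (h : Red l) : wlen (P l) = l.length := by
  rw [wlen, equiv_P h]

lemma red_unique {l₁ l₂ : List (Σ i, M i)} (h₁ : Red l₁) (h₂ : Red l₂) (h : P l₁ = P l₂) :
    l₁ = l₂ := by rw [← equiv_P h₁, ← equiv_P h₂, h]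

lemma red_equiv (x : CoprodI M) : Red (Word.equiv x).toList :=
  ⟨(Word.equiv x).ne_one, (List.isChain_map _).mpr (Word.equiv x).chain_ne⟩

lemma P_equiv (x : CoprodI M) : P (Word.equiv x).toList = x := by
  conv_rhs => rw [← Word.equiv.symm_apply_apply x]
  rfl

lemma simple_of_short [Nonempty ι] {x : CoprodI M} (h : wlen x ≤ 1) : Simple x := by
  have hred := red_equiv x
  have hx := P_equiv x
  rcases hl : (Word.equiv x).toList with _ | ⟨a, l'⟩
  · rw [hl] at hx; rw [← hx]; exact simple_one
  · rw [hl] at hx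
    have : l' = [] := by
      have := h
      rw [wlen, hl] at this
      simpa using this
    subst this
    rw [← hx]
    simpa [P] using simple_of a.1 a.2


end WithDec

end FPAux

namespace FPAux

variable {ι : Type*} {M : ι → Type*} [∀ i, Group (M i)]
  [DecidableEq ι] [∀ i, DecidableEq (M i)]

lemma P_cons (a : (Σ i, M i)) (t : List (Σ i, M i)) : P (a :: t) = of a.2 * P t := by
  simp [P]

lemma conj_pow' {A : Type*} [Group A] (u y : A) : ∀ n : ℕ, (u * y * u⁻¹) ^ n = u * y ^ n * u⁻¹
  | 0 => by simp
  | n+1 => by rw [pow_succ, conj_pow' u y n, pow_succ]; group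

lemma link_nil (l : List (Σ i, M i)) : Link ([] : List (Σ i, M i)) l := by
  intro p hp q hq; simp at hp

theorem key [Nonempty ι] : ∀ (N : ℕ) (l : List (Σ i, M i)), l.length ≤ N → Red l →
    ¬ Simple (P l) →
    ∃ v w z : List (Σ i, M i), Red v ∧ Red w ∧ Red z ∧
      Link v w ∧ Link w z ∧ Link v z ∧ Link w w ∧ w ≠ [] ∧ z ≠ [] ∧
      w.length ≤ v.length + z.length ∧
      ∀ n : ℕ, (P l) ^ (n + 1) = P v * (P w) ^ n * P z := by
  intro N
  induction N with
  | zero =>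
    intro l hl _ hs
    have : l = [] := List.length_eq_zero_iff.mp (Nat.le_zero.mp hl)
    subst this
    exact absurd (by simpa [P_nil] using (simple_one : Simple (1 : CoprodI M))) hs
  | succ N ih =>
    intro l hlen hred hs
    obtain _ | ⟨⟨i, g⟩, l'⟩ := l
    · exact absurd (by simpa [P_nil] using (simple_one : Simple (1 : CoprodI M))) hs
    by_cases hl' : l' = []
    · subst hl'
      exact absurd (by simpa [P, mul_one] using simple_of i g) hs
    have hgne : g ≠ 1 := hred.1 ⟨i, g⟩ List.mem_cons_self
    have hchain0 : ((⟨i, g⟩ :: l').map Sigma.fst).Chain' Ne := hred.2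
    rw [List.Chain', List.map_cons, List.isChain_cons] at hchain0
    obtain ⟨hhead, hchain'⟩ := hchain0
    rcases hA : l'.getLast hl' with ⟨i', g'⟩
    have hsplit : l'.dropLast ++ [(⟨i', g'⟩ : Σ i, M i)] = l' := by
      rw [← hA]; exact List.dropLast_append_getLast hl'
    set mid := l'.dropLast with hmiddef
    have hg'1 : g' ≠ 1 := by
      have := hred.1 (l'.getLast hl') (List.mem_cons_of_mem _ (List.getLast_mem hl'))
      rwa [hA] at this
    have hchain'' := hchain'
    rw [← hsplit, List.map_append, List.isChain_append] at hchain''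
    obtain ⟨hmidchain, -, hmidlast0⟩ := hchain''
    have hmidlast : ∀ p ∈ (mid.map Sigma.fst).getLast?, p ≠ i' := by
      intro p hp
      exact hmidlast0 p hp i' (by simp)
    have hredmid : Red mid := by
      refine ⟨fun b hb => hred.1 b (List.mem_cons_of_mem _ (List.dropLast_subset _ hb)),
        hmidchain⟩
    have hPl' : P l' = P mid * of g' := by
      rw [← hsplit, P_append]; simp [P]
    have hPl : P (⟨i, g⟩ :: l') = of g * (P mid * of g') := by
      rw [P_cons, hPl']
    have hlenl' : l'.length = mid.length + 1 := by
      conv_lhs => rw [← hsplit]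
      simp
    by_cases hii : i = i'
    case neg =>
      -- cyclically reduced case
      refine ⟨[], ⟨i, g⟩ :: l', ⟨i, g⟩ :: l', ⟨by simp, by simp [List.Chain']⟩, hred, hred,
        link_nil _, ?_, link_nil _, ?_, by simp, by simp, by simp, ?_⟩
      · -- Link l l
        intro p hp q hq
        have hql : (((⟨i, g⟩ :: l').map Sigma.fst)).head? = some i := by simp
        rw [hql] at hq
        have hpl : (((⟨i, g⟩ :: l').map Sigma.fst)).getLast? = some i' := by
          rw [List.getLast?_map]
          rw [show (⟨i, g⟩ :: l' : List (Σ i, M i)).getLast? = some ⟨i', g'⟩ from ?_]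
          · rfl
          · rw [show (⟨i, g⟩ :: l' : List (Σ i, M i)) = [⟨i, g⟩] ++ l' from rfl,
              List.getLast?_append_of_ne_nil _ hl', List.getLast?_eq_getLast hl', hA]
        rw [hpl] at hp
        simp only [Option.mem_def, Option.some.injEq] at hp hq
        subst hp; subst hq
        exact fun h => hii h.symm
      · -- Link l l (second copy)
        intro p hp q hq
        have hql : (((⟨i, g⟩ :: l').map Sigma.fst)).head? = some i := by simp
        rw [hql] at hq
        have hpl : (((⟨i, g⟩ :: l').map Sigma.fst)).getLast? = some i' := by
          rw [List.getLast?_map]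
          rw [show (⟨i, g⟩ :: l' : List (Σ i, M i)).getLast? = some ⟨i', g'⟩ from ?_]
          · rfl
          · rw [show (⟨i, g⟩ :: l' : List (Σ i, M i)) = [⟨i, g⟩] ++ l' from rfl,
              List.getLast?_append_of_ne_nil _ hl', List.getLast?_eq_getLast hl', hA]
        rw [hpl] at hp
        simp only [Option.mem_def, Option.some.injEq] at hp hq
        subst hp; subst hq
        exact fun h => hii h.symm
      · intro n
        rw [P_nil, one_mul, pow_succ]
    case pos =>
      subst hii
      have hijmid : ∀ q ∈ (mid.map Sigma.fst).head?, i ≠ q := by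
        intro q hq
        apply hhead
        have hmidne : mid ≠ [] := by
          intro h; rw [h] at hq; simp at hq
        rw [← hsplit, List.map_append,
          List.head?_append_of_ne_nil _ (by simpa using hmidne)]
        exact hq
      by_cases hgg : g' * g = 1
      · -- full cancellation case: x' = P mid
        have hginv : g' = g⁻¹ := eq_inv_of_mul_eq_one_left hgg
        have hofg' : (of g' : CoprodI M) = (of g)⁻¹ := by rw [hginv, map_inv]
        have hconj : P (⟨i, g⟩ :: l') = of g * P mid * (of g)⁻¹ := by
          rw [hPl, hofg']; group
        have hsmid : ¬ Simple (P mid) := by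
          intro hsim
          apply hs
          rw [hconj, show (of g : CoprodI M) * P mid * (of g)⁻¹
            = ((of g)⁻¹)⁻¹ * P mid * (of g)⁻¹ by rw [inv_inv]]
          exact simple_conj _ hsim
        have hmlen : mid.length ≤ N := by
          have h1 : (⟨i, g⟩ :: l').length = mid.length + 2 := by simp [hlenl']
          omega
        obtain ⟨v', w', z', rv', rw', rz', lvw', lwz', lvz', lww', hwne', hzne', hlen', hpow'⟩ :=
          ih mid hmlen hredmid hsmid
        have huniq : v' ++ z' = mid := by
          apply red_unique (red_append rv' rz' lvz') hredmid
          rw [P_append]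
          have := hpow' 0
          simpa using this.symm
        have hm2 : 2 ≤ mid.length := by
          by_contra hc
          push_neg at hc
          exact hsmid (simple_of_short (by rw [wlen_P hredmid]; omega))
        have hmidne : mid ≠ [] := by
          intro h; rw [h] at hm2; simp at hm2
        have hz'last : ∀ p ∈ (z'.map Sigma.fst).getLast?, p ≠ i := by
          intro p hp
          apply hmidlast
          rw [← huniq, List.map_append, List.getLast?_append_of_ne_nil _
            (by simpa using hzne')]
          exact hp
        have hheadmid_eq : z' = mid → ∀ q ∈ (z'.map Sigma.fst).head?, i ≠ q := by
          intro h q hq; exact hijmid q (by rw [← h]; exact hq)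
        have hw'eq : v' = [] → w' = z' := by
          intro hv
          have hz'mid : z' = mid := by rw [← huniq, hv]; rfl
          have h2 := hpow' 1
          rw [hv] at h2
          simp only [P_nil, one_mul, pow_one] at h2
          -- h2 : (P mid)^2 = P w' * P z'
          have : P w' = P mid := by
            rw [hz'mid] at h2
            have := h2
            rw [pow_two] at this
            exact mul_right_cancel this.symm
          exact red_unique rw' rz' (by rw [this, hz'mid])
        refine ⟨⟨i, g⟩ :: v', w', z' ++ [⟨i, g'⟩], ?_, rw', ?_, ?_, ?_, ?_, lww',
          hwne', by simp, ?_, ?_⟩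
        · -- Red v
          refine ⟨?_, ?_⟩
          · intro b hb
            rcases List.mem_cons.mp hb with h | h
            · rw [h]; exact hgne
            · exact rv'.1 b h
          · rw [List.Chain', List.map_cons, List.isChain_cons]
            refine ⟨?_, rv'.2⟩
            intro y hy
            have hv'ne : v' ≠ [] := by
              intro h; rw [h] at hy; simp at hy
            apply hijmid
            rw [← huniq, List.map_append,
              List.head?_append_of_ne_nil _ (by simpa using hv'ne)]
            exact hy
        · -- Red z
          refine red_append rz' ⟨by simpa using hg'1, by simp [List.Chain']⟩ ?_
          intro p hp q hq
          simp only [List.map_cons, List.map_nil, List.head?_cons, Option.mem_def,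
            Option.some.injEq] at hq
          subst hq
          exact hz'last p hp
        · -- Link v w'
          by_cases hv' : v' = []
          · intro p hp q hq
            have hz'mid : z' = mid := by rw [← huniq, hv']; rfl
            rw [hv'] at hp
            simp only [List.map_cons, List.map_nil, List.getLast?_singleton,
              Option.mem_def, Option.some.injEq] at hp
            subst hp
            have hwz : w' = z' := hw'eq hv'
            apply hheadmid_eq hz'mid
            rw [← hwz]; exact hq
          · intro p hp q hq
            apply lvw' p ?_ q hq
            rwa [List.map_cons, show i :: v'.map Sigma.fst = [i] ++ v'.map Sigma.fst from rfl,
              List.getLast?_append_of_ne_nil _ (by simpa using hv')] at hp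
        · -- Link w' z
          intro p hp q hq
          apply lwz' p hp q
          rwa [List.map_append, List.head?_append_of_ne_nil _ (by simpa using hzne')] at hq
        · -- Link v z
          intro p hp q hq
          have hqz' : q ∈ (z'.map Sigma.fst).head? := by
            rwa [List.map_append, List.head?_append_of_ne_nil _ (by simpa using hzne')] at hq
          by_cases hv' : v' = []
          · have hz'mid : z' = mid := by rw [← huniq, hv']; rfl
            rw [hv'] at hp
            simp only [List.map_cons, List.map_nil, List.getLast?_singleton,
              Option.mem_def, Option.some.injEq] at hp
            subst hp
            exact hheadmid_eq hz'mid q hqz'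
          · apply lvz' p ?_ q hqz'
            rwa [List.map_cons, show i :: v'.map Sigma.fst = [i] ++ v'.map Sigma.fst from rfl,
              List.getLast?_append_of_ne_nil _ (by simpa using hv')] at hp
        · -- length
          simp only [List.length_cons, List.length_append, List.length_singleton]
          omega
        · -- powers
          intro n
          have hPv : P (⟨i, g⟩ :: v') = of g * P v' := P_cons _ _
          have hPz : P (z' ++ [⟨i, g'⟩]) = P z' * (of g)⁻¹ := by
            rw [P_append, show P [(⟨i, g'⟩ : Σ i, M i)] = (of g' : CoprodI M) from by simp [P],
              hofg']
          rw [hconj, conj_pow', hpow' n, hPv, hPz]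
          simp only [mul_assoc]
      · -- merged letter case: x' = P (mid ++ [⟨i, g' * g⟩])
        set rl := mid ++ [(⟨i, g' * g⟩ : Σ i, M i)] with hrldef
        have hredrl : Red rl := by
          refine red_append hredmid ⟨by simpa using hgg, by simp [List.Chain']⟩ ?_
          intro p hp q hq
          simp only [List.map_cons, List.map_nil, List.head?_cons, Option.mem_def,
            Option.some.injEq] at hq
          subst hq
          exact hmidlast p hp
        have hPrl : P rl = P mid * of (g' * g) := by
          rw [hrldef, P_append]; simp [P]
        have hconj : P (⟨i, g⟩ :: l') = of g * P rl * (of g)⁻¹ := by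
          rw [hPl, hPrl, map_mul]; group
        have hsrl : ¬ Simple (P rl) := by
          intro hsim
          apply hs
          rw [hconj, show (of g : CoprodI M) * P rl * (of g)⁻¹
            = ((of g)⁻¹)⁻¹ * P rl * (of g)⁻¹ by rw [inv_inv]]
          exact simple_conj _ hsim
        have hrllen : rl.length ≤ N := by
          have h1 : (⟨i, g⟩ :: l').length = mid.length + 2 := by simp [hlenl']
          have h2 : rl.length = mid.length + 1 := by simp [hrldef]
          omega
        obtain ⟨v', w', z', rv', rw', rz', lvw', lwz', lvz', lww', hwne', hzne', hlen', hpow'⟩ :=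
          ih rl hrllen hredrl hsrl
        have huniq : v' ++ z' = rl := by
          apply red_unique (red_append rv' rz' lvz') hredrl
          rw [P_append]
          have := hpow' 0
          simpa using this.symm
        have hrl2 : 2 ≤ rl.length := by
          by_contra hc
          push_neg at hc
          exact hsrl (simple_of_short (by rw [wlen_P hredrl]; omega))
        have hmidne : mid ≠ [] := by
          intro h
          rw [hrldef, h] at hrl2
          simp at hrl2
        have hheadrl : ∀ q ∈ (rl.map Sigma.fst).head?, i ≠ q := by
          intro q hq
          apply hijmid
          rwa [hrldef, List.map_append,
            List.head?_append_of_ne_nil _ (by simpa using hmidne)] at hq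
        have hlastz' : z'.getLast? = some ⟨i, g' * g⟩ := by
          have h1 : (v' ++ z').getLast? = z'.getLast? :=
            List.getLast?_append_of_ne_nil _ hzne'
          have h2 : rl.getLast? = some ⟨i, g' * g⟩ := by
            rw [hrldef, List.getLast?_append_of_ne_nil _ (List.cons_ne_nil _ _)]
            rfl
          rw [← h1, huniq, h2]
        have hzsplit : z'.dropLast ++ [(⟨i, g' * g⟩ : Σ i, M i)] = z' :=
          List.dropLast_append_getLast? _ hlastz'
        set z'' := z'.dropLast with hz''def
        have hmapz : ((z'' ++ [(⟨i, g'⟩ : Σ i, M i)]).map Sigma.fst) = z'.map Sigma.fst := by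
          conv_rhs => rw [← hzsplit]
          simp
        have hw'eq : v' = [] → w' = z' := by
          intro hv
          have hz'rl : z' = rl := by rw [← huniq, hv]; rfl
          have h2 := hpow' 1
          rw [hv] at h2
          simp only [P_nil, one_mul, pow_one] at h2
          have : P w' = P rl := by
            rw [hz'rl] at h2
            rw [pow_two] at h2
            exact mul_right_cancel h2.symm
          exact red_unique rw' rz' (by rw [this, hz'rl])
        refine ⟨⟨i, g⟩ :: v', w', z'' ++ [⟨i, g'⟩], ?_, rw', ?_, ?_, ?_, ?_, lww',
          hwne', by simp, ?_, ?_⟩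
        · -- Red v
          refine ⟨?_, ?_⟩
          · intro b hb
            rcases List.mem_cons.mp hb with h | h
            · rw [h]; exact hgne
            · exact rv'.1 b h
          · rw [List.Chain', List.map_cons, List.isChain_cons]
            refine ⟨?_, rv'.2⟩
            intro y hy
            have hv'ne : v' ≠ [] := by
              intro h; rw [h] at hy; simp at hy
            apply hheadrl
            rw [← huniq, List.map_append,
              List.head?_append_of_ne_nil _ (by simpa using hv'ne)]
            exact hy
        · -- Red z
          refine ⟨?_, ?_⟩
          · intro b hb
            rcases List.mem_append.mp hb with h | h
            · exact rz'.1 b (List.dropLast_subset _ h)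
            · simp only [List.mem_singleton] at h
              rw [h]; exact hg'1
          · rw [hmapz]; exact rz'.2
        · -- Link v w'
          by_cases hv' : v' = []
          · intro p hp q hq
            have hz'rl : z' = rl := by rw [← huniq, hv']; rfl
            rw [hv'] at hp
            simp only [List.map_cons, List.map_nil, List.getLast?_singleton,
              Option.mem_def, Option.some.injEq] at hp
            subst hp
            have hwz : w' = z' := hw'eq hv'
            apply hheadrl
            rw [← hz'rl, ← hwz]
            exact hq
          · intro p hp q hq
            apply lvw' p ?_ q hq
            rwa [List.map_cons, show i :: v'.map Sigma.fst = [i] ++ v'.map Sigma.fst from rfl,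
              List.getLast?_append_of_ne_nil _ (by simpa using hv')] at hp
        · -- Link w' z
          intro p hp q hq
          apply lwz' p hp q
          rwa [hmapz] at hq
        · -- Link v z
          intro p hp q hq
          have hqz' : q ∈ (z'.map Sigma.fst).head? := by rwa [hmapz] at hq
          by_cases hv' : v' = []
          · have hz'rl : z' = rl := by rw [← huniq, hv']; rfl
            rw [hv'] at hp
            simp only [List.map_cons, List.map_nil, List.getLast?_singleton,
              Option.mem_def, Option.some.injEq] at hp
            subst hp
            apply hheadrl
            rw [← hz'rl]
            exact hqz'
          · apply lvz' p ?_ q hqz'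
            rwa [List.map_cons, show i :: v'.map Sigma.fst = [i] ++ v'.map Sigma.fst from rfl,
              List.getLast?_append_of_ne_nil _ (by simpa using hv')] at hp
        · -- length
          have hzlen : z'.length = z''.length + 1 := by
            conv_lhs => rw [← hzsplit]
            simp
          simp only [List.length_cons, List.length_append, List.length_singleton]
          omega
        · -- powers
          intro n
          have hPv : P (⟨i, g⟩ :: v') = of g * P v' := P_cons _ _
          have hPz' : P z' = P z'' * of (g' * g) := by
            conv_lhs => rw [← hzsplit]
            rw [P_append]; simp [P]
          have hPz : P (z'' ++ [⟨i, g'⟩]) = P z' * (of g)⁻¹ := by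
            rw [P_append, hPz',
              show P [(⟨i, g'⟩ : Σ i, M i)] = (of g' : CoprodI M) from by simp [P], map_mul]
            group
          rw [hconj, conj_pow', hpow' n, hPv, hPz]
          simp only [mul_assoc]

end FPAux

namespace FPAux

variable {ι : Type*} {M : ι → Type*} [∀ i, Group (M i)]
  [DecidableEq ι] [∀ i, DecidableEq (M i)]

theorem main [Nonempty ι] (x : CoprodI M) (hx : ¬ Simple x) :
    ∃ a b c : CoprodI M, wlen a + wlen c ≤ 2 * wlen x ∧ 1 ≤ wlen b ∧ wlen b ≤ wlen x ∧
      ∀ n : ℕ, 3 ≤ n → x ^ n = a * b ^ (n - 2) * c ∧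
        wlen (x ^ n) = wlen a + (n - 2) * wlen b + wlen c := by
  obtain ⟨v, w, z, rv, rw_, rz, lvw, lwz, lvz, lww, hwne, hzne, hwlen, hpow⟩ :=
    key (wlen (M := M) x) (Word.equiv x).toList le_rfl (red_equiv x)
      (by rw [P_equiv]; exact hx)
  have hPx : P (Word.equiv x).toList = x := P_equiv x
  rw [hPx] at hpow
  have hrep := rep_spec (v := v) rw_ rz hwne hzne lww lwz lvw lvz
  have hx1 : x = P v * P z := by simpa using hpow 0
  have hredvz : Red (v ++ z) := red_append rv rz lvz
  have hwlenx : wlen x = v.length + z.length := by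
    rw [hx1, ← P_append, wlen_P hredvz, List.length_append]
  have hpow' : ∀ n : ℕ, wlen (x ^ (n + 1)) = v.length + n * w.length + z.length := by
    intro n
    obtain ⟨hredr, hlinkvr, _, hlenr, hPr⟩ := hrep n
    have hxp : x ^ (n + 1) = P (v ++ rep w z n) := by rw [P_append, hPr, hpow n, mul_assoc]
    rw [hxp, wlen_P (red_append rv hredr hlinkvr), List.length_append, hlenr]
    ring
  have h1 : wlen (P v * P w) = v.length + w.length := by
    rw [← P_append, wlen_P (red_append rv rw_ lvw), List.length_append]
  have h2 : wlen (P z) = z.length := wlen_P rz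
  have h3 : wlen (P w) = w.length := wlen_P rw_
  have hw1 : 1 ≤ w.length := List.length_pos_iff.mpr hwne
  refine ⟨P v * P w, P w, P z, ?_, ?_, ?_, ?_⟩
  · rw [h1, h2, hwlenx]; omega
  · rw [h3]; omega
  · rw [h3, hwlenx]; omega
  · intro n hn
    constructor
    · have h := hpow (n - 1)
      rw [show n - 1 + 1 = n from by omega] at h
      rw [h, show n - 1 = 1 + (n - 2) from by omega, pow_add, pow_one]
      simp [mul_assoc]
    · have hh := hpow' (n - 1)
      rw [show n - 1 + 1 = n from by omega] at hh
      rw [hh, h1, h2, h3, show n - 1 = 1 + (n - 2) from by omega, add_mul, one_mul]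
      ring
end FPAux

namespace FPAux

variable {ι : Type*} {M : ι → Type*} [∀ i, Group (M i)]
  [DecidableEq ι] [∀ i, DecidableEq (M i)]

lemma rcons_length {i : ι} (p : Pair M i) :
    (rcons p).toList.length ≤ p.tail.toList.length + 1 := by
  rw [rcons]
  split
  · exact Nat.le_succ _
  · simp [Monoid.CoprodI.Word.cons]

lemma tail_length (i : ι) (w : Word M) :
    ((equivPair i w).tail).toList.length ≤ w.toList.length := by
  conv_rhs => rw [← (equivPair i).symm_apply_apply w]
  rw [equivPair_symm, rcons]
  split
  · exact le_rfl
  · simp [Monoid.CoprodI.Word.cons]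

lemma wlen_of_mul {i : ι} (m : M i) (x : CoprodI M) : wlen (of m * x) ≤ wlen x + 1 := by
  have hE : Word.equiv (of m * x) = of m • Word.equiv x := by
    rw [Equiv.apply_eq_iff_eq_symm_apply]
    show of m * x = (of m • Word.equiv x).prod
    rw [prod_smul]
    congr 1
    exact (Word.equiv.symm_apply_apply x).symm
  rw [wlen, hE, of_smul_def]
  calc (rcons _).toList.length ≤ _ + 1 := rcons_length _
    _ ≤ _ + 1 := by
        exact Nat.add_le_add_right (tail_length i (Word.equiv x)) 1

lemma red_nil : Red ([] : List (Σ i, M i)) := ⟨by simp, by simp [List.Chain']⟩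

lemma wlen_one : wlen (1 : CoprodI M) = 0 := by
  have : (1 : CoprodI M) = P [] := rfl
  rw [this, wlen_P red_nil]
  rfl

end FPAux

section Transfer

open FPAux Monoid.Coprod

universe u v

variable (G : Type u) (H : Type v) [Group G] [Group H]

/-- two-element family -/
def KK : Bool → Type (max u v) := fun b => cond b (ULift.{v} G) (ULift.{u} H)

instance : ∀ b, Group (KK G H b) := fun b => by cases b <;> dsimp [KK] <;> infer_instance


def phi : Monoid.Coprod G H →* CoprodI (KK G H) :=
  Monoid.Coprod.lift
    ((CoprodI.of (M := KK G H) (i := true)).comp (MulEquiv.ulift.symm.toMonoidHom))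
    ((CoprodI.of (M := KK G H) (i := false)).comp (MulEquiv.ulift.symm.toMonoidHom))

def psi : CoprodI (KK G H) →* Monoid.Coprod G H :=
  CoprodI.lift (fun b => match b with
    | true => (Monoid.Coprod.inl (M := G) (N := H)).comp (MulEquiv.ulift.toMonoidHom)
    | false => (Monoid.Coprod.inr (M := G) (N := H)).comp (MulEquiv.ulift.toMonoidHom))

lemma psi_comp_phi : (psi G H).comp (phi G H) = MonoidHom.id _ := by
  apply Monoid.Coprod.hom_ext
  · ext g
    simp only [MonoidHom.comp_apply, MonoidHom.id_apply, phi, psi,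
      Monoid.Coprod.lift_apply_inl, CoprodI.lift_of]
    rfl
  · ext h
    simp only [MonoidHom.comp_apply, MonoidHom.id_apply, phi, psi,
      Monoid.Coprod.lift_apply_inr, CoprodI.lift_of]
    rfl

lemma phi_comp_psi : (phi G H).comp (psi G H) = MonoidHom.id _ := by
  apply CoprodI.ext_hom
  intro b
  cases b <;> ext m <;>
    (simp only [MonoidHom.comp_apply, MonoidHom.id_apply, phi, psi,
      Monoid.Coprod.lift_apply_inl, Monoid.Coprod.lift_apply_inr, CoprodI.lift_of]; rfl)

/-- The equivalence between the binary coproduct and the indexed coproduct. -/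
def eGH : Monoid.Coprod G H ≃* CoprodI (KK G H) :=
  MonoidHom.toMulEquiv (phi G H) (psi G H) (psi_comp_phi G H) (phi_comp_psi G H)

variable {G H}

lemma eGH_inl (g : G) :
    eGH G H (Monoid.Coprod.inl g) = CoprodI.of (M := KK G H) (i := true) (ULift.up g) := by
  simp [eGH, MonoidHom.toMulEquiv, phi, Monoid.Coprod.lift_apply_inl]
  rfl

lemma eGH_inr (h : H) :
    eGH G H (Monoid.Coprod.inr h) = CoprodI.of (M := KK G H) (i := false) (ULift.up h) := by
  simp [eGH, MonoidHom.toMulEquiv, phi, Monoid.Coprod.lift_apply_inr]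
  rfl

lemma eGH_symm_of : ∀ (b : Bool) (m : KK G H b),
    (eGH G H).symm (CoprodI.of m) =
      (match b, m with
        | true, m => Monoid.Coprod.inl (M := G) (N := H) m.down
        | false, m => Monoid.Coprod.inr (M := G) (N := H) m.down) := by
  intro b m
  cases b <;>
    (simp only [eGH, MonoidHom.toMulEquiv, MulEquiv.symm_mk, MulEquiv.coe_mk,
      Equiv.coe_fn_mk, psi, CoprodI.lift_of]; rfl)

end Transfer

/-- Syllable length of an element of the free product `G ∗ H`: the geodesic length
with respect to the generating set `G ∪ H` (the union of the canonical images of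
`G` and `H`). This coincides with the number of syllables in the normal form. -/
noncomputable def sylLen {G H : Type*} [Group G] [Group H] (f : Monoid.Coprod G H) : ℕ :=
  sInf {k | ∃ w : List (Monoid.Coprod G H), w.length = k ∧
    (∀ x ∈ w, (∃ g : G, x = Monoid.Coprod.inl g) ∨ (∃ h : H, x = Monoid.Coprod.inr h)) ∧
    w.prod = f}

/-- An element of `G ∗ H` is *simple* if it is conjugate in `G ∗ H` to an element of
the canonical image of `G` or of `H`. -/
def IsSimpleElem {G H : Type*} [Group G] [Group H] (f : Monoid.Coprod G H) : Prop :=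
  ∃ u x : Monoid.Coprod G H,
    ((∃ g : G, x = Monoid.Coprod.inl g) ∨ (∃ h : H, x = Monoid.Coprod.inr h)) ∧
    f = u⁻¹ * x * u

section Final

universe u v

variable {G : Type u} {H : Type v} [Group G] [Group H]

/-- fixed classical decidability for the two-element family -/
noncomputable def dK (G : Type u) (H : Type v) [Group G] [Group H] :
    ∀ b, DecidableEq (KK G H b) := fun _ => Classical.decEq _

/-- word length specialized to the two-element family -/
noncomputable def wlenB (x : Monoid.CoprodI (KK G H)) : ℕ :=
  @FPAux.wlen Bool (KK G H) _ instDecidableEqBool (dK G H) x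

lemma wlenB_one : wlenB (G := G) (H := H) 1 = 0 :=
  @FPAux.wlen_one Bool (KK G H) _ instDecidableEqBool (dK G H)

lemma wlenB_of_mul {b : Bool} (m : KK G H b) (x : Monoid.CoprodI (KK G H)) :
    wlenB (CoprodI.of m * x) ≤ wlenB x + 1 :=
  @FPAux.wlen_of_mul Bool (KK G H) _ instDecidableEqBool (dK G H) b m x

lemma mainB (x : Monoid.CoprodI (KK G H)) (hx : ¬ FPAux.Simple x) :
    ∃ a b c : Monoid.CoprodI (KK G H),
      wlenB a + wlenB c ≤ 2 * wlenB x ∧ 1 ≤ wlenB b ∧ wlenB b ≤ wlenB x ∧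
      ∀ n : ℕ, 3 ≤ n → x ^ n = a * b ^ (n - 2) * c ∧
        wlenB (x ^ n) = wlenB a + (n - 2) * wlenB b + wlenB c :=
  @FPAux.main Bool (KK G H) _ instDecidableEqBool (dK G H) _ x hx

/-- the reduced word of an element, specialized -/
noncomputable def eqvB (x : Monoid.CoprodI (KK G H)) : Monoid.CoprodI.Word (KK G H) :=
  @Monoid.CoprodI.Word.equiv Bool (KK G H) _ instDecidableEqBool (dK G H) x

lemma red_eqvB (x : Monoid.CoprodI (KK G H)) : FPAux.Red (eqvB x).toList :=
  @FPAux.red_equiv Bool (KK G H) _ instDecidableEqBool (dK G H) x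

lemma P_eqvB (x : Monoid.CoprodI (KK G H)) : FPAux.P (eqvB x).toList = x :=
  @FPAux.P_equiv Bool (KK G H) _ instDecidableEqBool (dK G H) x

lemma wlenB_def (x : Monoid.CoprodI (KK G H)) : wlenB x = (eqvB x).toList.length := rfl

lemma simple_transfer (f : Monoid.Coprod G H) :
    IsSimpleElem f ↔ FPAux.Simple (eGH G H f) := by
  constructor
  · rintro ⟨u, x, hx, rfl⟩
    rcases hx with ⟨g, rfl⟩ | ⟨h, rfl⟩
    · exact ⟨eGH G H u, true, ULift.up g, by rw [map_mul, map_mul, map_inv, eGH_inl]⟩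
    · exact ⟨eGH G H u, false, ULift.up h, by rw [map_mul, map_mul, map_inv, eGH_inr]⟩
  · rintro ⟨u, b, m, hm⟩
    have h2 : f = ((eGH G H).symm u)⁻¹ * (eGH G H).symm (CoprodI.of m) * (eGH G H).symm u := by
      apply (eGH G H).injective
      rw [hm]
      simp [map_mul, map_inv, MulEquiv.apply_symm_apply]
    cases b with
    | true =>
      exact ⟨(eGH G H).symm u, Monoid.Coprod.inl m.down, Or.inl ⟨m.down, rfl⟩,
        by rw [h2, eGH_symm_of]⟩
    | false =>
      exact ⟨(eGH G H).symm u, Monoid.Coprod.inr m.down, Or.inr ⟨m.down, rfl⟩,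
        by rw [h2, eGH_symm_of]⟩

lemma wlenB_list_le (w : List (Monoid.Coprod G H))
    (hlet : ∀ x ∈ w, (∃ g : G, x = Monoid.Coprod.inl g) ∨ (∃ h : H, x = Monoid.Coprod.inr h)) :
    wlenB (eGH G H w.prod) ≤ w.length := by
  induction w with
  | nil =>
    rw [List.prod_nil, map_one, wlenB_one]
    simp
  | cons x t iht =>
    rw [List.prod_cons, map_mul]
    have hx := hlet x List.mem_cons_self
    have ht := iht (fun y hy => hlet y (List.mem_cons_of_mem _ hy))
    rcases hx with ⟨g, rfl⟩ | ⟨h, rfl⟩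
    · rw [eGH_inl]
      calc wlenB (CoprodI.of _ * eGH G H t.prod) ≤ wlenB (eGH G H t.prod) + 1 :=
            wlenB_of_mul _ _
        _ ≤ t.length + 1 := by omega
        _ = (Monoid.Coprod.inl g :: t).length := by simp
    · rw [eGH_inr]
      calc wlenB (CoprodI.of _ * eGH G H t.prod) ≤ wlenB (eGH G H t.prod) + 1 :=
            wlenB_of_mul _ _
        _ ≤ t.length + 1 := by omega
        _ = (Monoid.Coprod.inr h :: t).length := by simp

lemma sylLen_eq_wlenB (f : Monoid.Coprod G H) :
    sylLen f = wlenB (eGH G H f) := by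
  have hP : FPAux.P (eqvB (eGH G H f)).toList = eGH G H f := P_eqvB _
  set l := (eqvB (eGH G H f)).toList with hldef
  set w : List (Monoid.Coprod G H) := l.map (fun a => (eGH G H).symm (CoprodI.of a.2))
    with hwdef
  have hwlen : w.length = wlenB (eGH G H f) := by
    rw [hwdef, List.length_map, wlenB_def]
  have hletters : ∀ x ∈ w,
      (∃ g : G, x = Monoid.Coprod.inl g) ∨ (∃ h : H, x = Monoid.Coprod.inr h) := by
    intro x hx
    obtain ⟨⟨b, m⟩, _, rfl⟩ := List.mem_map.mp hx
    cases b with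
    | true => exact Or.inl ⟨m.down, (eGH_symm_of true m)⟩
    | false => exact Or.inr ⟨m.down, (eGH_symm_of false m)⟩
  have hprod : w.prod = f := by
    have hmm : w = (l.map fun a => CoprodI.of a.2).map
        ((eGH G H).symm : CoprodI (KK G H) →* Monoid.Coprod G H) := by
      rw [hwdef, List.map_map]
      rfl
    rw [hmm, ← map_list_prod]
    show (eGH G H).symm (FPAux.P l) = f
    rw [hP, MulEquiv.symm_apply_apply]
  apply _root_.le_antisymm
  · exact Nat.sInf_le ⟨w, hwlen, hletters, hprod⟩
  · refine le_csInf ⟨_, w, hwlen, hletters, hprod⟩ ?_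
    rintro k ⟨w', hw'len, hw'let, rfl⟩
    rw [← hw'len]
    exact wlenB_list_le w' hw'let

end Final

theorem power_normal_form_of_nonsimple
    {G H : Type*} [Group G] [Group H] (f : Monoid.Coprod G H)
    (hf : ¬ IsSimpleElem f) :
    ∃ a b c : Monoid.Coprod G H,
      sylLen a + sylLen c ≤ 2 * sylLen f ∧
      1 ≤ sylLen b ∧ sylLen b ≤ sylLen f ∧
      ∀ n : ℕ, 3 ≤ n →
        f ^ n = a * b ^ (n - 2) * c ∧
        sylLen (f ^ n) = sylLen a + (n - 2) * sylLen b + sylLen c := by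
  have hns : ¬ FPAux.Simple (eGH G H f) := fun h => hf ((simple_transfer f).mpr h)
  obtain ⟨a', b', c', h1, h2, h3, h4⟩ := mainB (eGH G H f) hns
  refine ⟨(eGH G H).symm a', (eGH G H).symm b', (eGH G H).symm c', ?_, ?_, ?_, ?_⟩
  · rw [sylLen_eq_wlenB, sylLen_eq_wlenB, sylLen_eq_wlenB,
      MulEquiv.apply_symm_apply, MulEquiv.apply_symm_apply]
    exact h1
  · rw [sylLen_eq_wlenB, MulEquiv.apply_symm_apply]
    exact h2
  · rw [sylLen_eq_wlenB, sylLen_eq_wlenB, MulEquiv.apply_symm_apply]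
    exact h3
  · intro n hn
    obtain ⟨hp, hl⟩ := h4 n hn
    constructor
    · apply (eGH G H).injective
      rw [map_pow, map_mul, map_mul, map_pow,
        MulEquiv.apply_symm_apply, MulEquiv.apply_symm_apply, MulEquiv.apply_symm_apply]
      exact hp
    · rw [sylLen_eq_wlenB, sylLen_eq_wlenB, sylLen_eq_wlenB, sylLen_eq_wlenB,
        MulEquiv.apply_symm_apply, MulEquiv.apply_symm_apply, MulEquiv.apply_symm_apply,
        map_pow]
      exact hl
end

section
/- Let G be a group with two finite generating sets S₁ and S₂. If G is a polynomially bounded knapsack (pbk) group with respect to S₁, then G is a polynomially bounded knapsack group with respect to S₂; i.e., the pbk property is independent of the choice of finite generating set. -/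
/-- Word length of `g` with respect to a generating set `S`: the least `k` such that
`g` is a product of `k` elements of `S ∪ S⁻¹`. -/
noncomputable def wordLen {G : Type*} [Group G] (S : Set G) (g : G) : ℕ :=
  sInf {k | ∃ w : List G, w.length = k ∧ (∀ x ∈ w, x ∈ S ∨ x⁻¹ ∈ S) ∧ w.prod = g}

/-- `G` is a polynomially bounded knapsack (pbk) group with respect to the generating
set `S`: there is a polynomial `q` with non-negative integer coefficients such that a
knapsack instance `(g₁, …, g_k, g)` has a solution iff it has a solution with all
exponents bounded by `q(N)`, where `N = |g₁|_S + … + |g_k|_S + |g|_S`. -/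
def IsPBK {G : Type*} [Group G] (S : Set G) : Prop :=
  ∃ q : Polynomial ℕ, ∀ (k : ℕ) (g : Fin k → G) (g₀ : G),
    (∃ n : Fin k → ℕ, (List.ofFn fun i => g i ^ n i).prod = g₀) ↔
    (∃ n : Fin k → ℕ, (List.ofFn fun i => g i ^ n i).prod = g₀ ∧
      ∀ i : Fin k, n i ≤ q.eval ((∑ j, wordLen S (g j)) + wordLen S g₀))

lemma wordLen_set_nonempty {G : Type*} [Group G] {S : Set G}
    (hgen : Subgroup.closure S = ⊤) (g : G) :
    {k | ∃ w : List G, w.length = k ∧ (∀ x ∈ w, x ∈ S ∨ x⁻¹ ∈ S) ∧ w.prod = g}.Nonempty := by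
  have hg : g ∈ (Subgroup.closure S).toSubmonoid := by rw [hgen]; trivial
  rw [Subgroup.closure_toSubmonoid] at hg
  obtain ⟨w, hw, hprod⟩ := Submonoid.exists_list_of_mem_closure hg
  refine ⟨w.length, w, rfl, fun x hx => ?_, hprod⟩
  rcases hw x hx with h | h
  · exact Or.inl h
  · exact Or.inr h

lemma wordLen_spec {G : Type*} [Group G] {S : Set G}
    (hgen : Subgroup.closure S = ⊤) (g : G) :
    ∃ w : List G, w.length = wordLen S g ∧ (∀ x ∈ w, x ∈ S ∨ x⁻¹ ∈ S) ∧ w.prod = g :=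
  Nat.sInf_mem (wordLen_set_nonempty hgen g)

lemma wordLen_le {G : Type*} [Group G] {S : Set G} {g : G} {w : List G}
    (hw : ∀ x ∈ w, x ∈ S ∨ x⁻¹ ∈ S) (hprod : w.prod = g) :
    wordLen S g ≤ w.length :=
  Nat.sInf_le ⟨w, rfl, hw, hprod⟩

lemma poly_eval_mono (q : Polynomial ℕ) : Monotone fun x => q.eval x := by
  intro a b hab
  simp only [Polynomial.eval_eq_sum_range]
  exact Finset.sum_le_sum fun i _ =>
    Nat.mul_le_mul le_rfl (Nat.pow_le_pow_left hab i)

/-- Comparison of word lengths with respect to two finite generating sets. -/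
lemma wordLen_comparison {G : Type*} [Group G] (S₁ S₂ : Set G)
    (hS₂fin : S₂.Finite)
    (hS₁gen : Subgroup.closure S₁ = ⊤) (hS₂gen : Subgroup.closure S₂ = ⊤) :
    ∃ C : ℕ, ∀ g : G, wordLen S₁ g ≤ C * wordLen S₂ g := by
  classical
  set C : ℕ := hS₂fin.toFinset.sup fun x => max (wordLen S₁ x) (wordLen S₁ x⁻¹) with hC
  refine ⟨C, fun g => ?_⟩
  obtain ⟨w, hlen, hw, hprod⟩ := wordLen_spec hS₂gen g
  -- each letter of w has S₁-word length ≤ C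
  have hletter : ∀ x ∈ w, wordLen S₁ x ≤ C := by
    intro x hx
    rcases hw x hx with h | h
    · exact le_trans (le_max_left _ _)
        (Finset.le_sup (f := fun x => max (wordLen S₁ x) (wordLen S₁ x⁻¹))
          (hS₂fin.mem_toFinset.2 h))
    · have := Finset.le_sup (f := fun x => max (wordLen S₁ x) (wordLen S₁ x⁻¹))
        (hS₂fin.mem_toFinset.2 h)
      simpa [inv_inv] using le_trans (le_max_right (wordLen S₁ x⁻¹) (wordLen S₁ x⁻¹⁻¹)) this
  -- replace each letter by an S₁-word
  have key : ∀ w : List G, (∀ x ∈ w, wordLen S₁ x ≤ C) →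
      wordLen S₁ w.prod ≤ C * w.length := by
    intro w
    induction w with
    | nil =>
      intro _
      have : wordLen S₁ (1 : G) ≤ ([] : List G).length :=
        wordLen_le (by simp) (by simp)
      simpa using this
    | cons a t ih =>
      intro h
      have ha : wordLen S₁ a ≤ C := h a List.mem_cons_self
      have ht := ih fun x hx => h x (List.mem_cons_of_mem a hx)
      obtain ⟨wa, hwa_len, hwa, hwa_prod⟩ := wordLen_spec hS₁gen a
      obtain ⟨wt, hwt_len, hwt, hwt_prod⟩ := wordLen_spec hS₁gen t.prod
      have hcat : wordLen S₁ (a * t.prod) ≤ (wa ++ wt).length := by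
        apply wordLen_le
        · intro x hx
          rcases List.mem_append.1 hx with hx | hx
          · exact hwa x hx
          · exact hwt x hx
        · rw [List.prod_append, hwa_prod, hwt_prod]
      rw [List.prod_cons]
      calc wordLen S₁ (a * t.prod) ≤ (wa ++ wt).length := hcat
        _ = wordLen S₁ a + wordLen S₁ t.prod := by
            rw [List.length_append, hwa_len, hwt_len]
        _ ≤ C + C * t.length := Nat.add_le_add ha ht
        _ = C * (a :: t).length := by rw [List.length_cons]; ring
  calc wordLen S₁ g = wordLen S₁ w.prod := by rw [hprod]
    _ ≤ C * w.length := key w hletter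
    _ = C * wordLen S₂ g := by rw [hlen]

theorem isPBK_independent_of_generating_set
    {G : Type*} [Group G] (S₁ S₂ : Set G)
    (hS₁fin : S₁.Finite) (hS₂fin : S₂.Finite)
    (hS₁gen : Subgroup.closure S₁ = ⊤) (hS₂gen : Subgroup.closure S₂ = ⊤)
    (hpbk : IsPBK S₁) : IsPBK S₂ := by
  obtain ⟨q, hq⟩ := hpbk
  obtain ⟨C, hC⟩ := wordLen_comparison S₁ S₂ hS₂fin hS₁gen hS₂gen
  refine ⟨q.comp (Polynomial.C C * Polynomial.X), fun k g g₀ => ?_⟩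
  constructor
  · intro hsol
    obtain ⟨n, hn, hbound⟩ := (hq k g g₀).1 hsol
    refine ⟨n, hn, fun i => ?_⟩
    refine le_trans (hbound i) ?_
    rw [Polynomial.eval_comp]
    apply poly_eval_mono
    simp only [Polynomial.eval_mul, Polynomial.eval_C, Polynomial.eval_X, Nat.mul_add]
    refine Nat.add_le_add ?_ (hC g₀)
    rw [Finset.mul_sum]
    exact Finset.sum_le_sum fun j _ => hC (g j)
  · rintro ⟨n, hn, -⟩
    exact ⟨n, hn⟩
end

section
/- Let F be a free group with basis v₁, …, v_n where n ≥ 2, let k ≥ 1, and let o, t : {1, …, k} → {1, …, n} be functions satisfying o(j) < t(j) for every j. If the product (v_{o(1)} v_{t(1)}⁻¹)(v_{o(2)} v_{t(2)}⁻¹) ⋯ (v_{o(k)} v_{t(k)}⁻¹) equals v₁ v_n⁻¹ in F, then o(1) = 1, t(k) = n, and t(j) = o(j+1) for every 1 ≤ j ≤ k−1. -/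
private lemma fg_of_mul_of_inv {α : Type*} (a b : α) :
    FreeGroup.of a * (FreeGroup.of b)⁻¹ = FreeGroup.mk [(a, true), (b, false)] := by
  rw [show (FreeGroup.of b)⁻¹ = FreeGroup.mk [(b, false)] from by
    rw [FreeGroup.of, FreeGroup.inv_mk]; rfl]
  rw [FreeGroup.of, FreeGroup.mul_mk]; rfl

private lemma fg_prod_map_mk {α : Type*} (Ls : List (List (α × Bool))) :
    (Ls.map FreeGroup.mk).prod = FreeGroup.mk Ls.flatten := by
  induction Ls with
  | nil => rfl
  | cons l ls ih => simp [ih, FreeGroup.mul_mk]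

private lemma fg_getLastD_cons {α : Type*} (a : α) (l : List α) :
    l.getLastD a = (a :: l).getLast (List.cons_ne_nil _ _) := by
  induction l generalizing a with
  | nil => rfl
  | cons b l ih =>
    rw [List.getLastD_cons, List.getLast_cons (List.cons_ne_nil _ _)]
    exact ih b

private lemma fg_getLast?_ofFn {α : Type*} {k : ℕ} (f : Fin (k + 1) → α) :
    (List.ofFn f).getLast? = some (f ⟨k, Nat.lt_succ_self k⟩) := by
  have hne : List.ofFn f ≠ [] := by simp
  rw [List.getLast?_eq_getLast hne, List.getLast_ofFn hne]
  congr 1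

private lemma fg_core {n : ℕ} (L : List (Fin n × Fin n)) :
    ∀ a b : Fin n, a < b → (∀ p ∈ L, p.1 < p.2) →
    ∃ w : List (Fin n × Bool),
      FreeGroup.reduce (((a, b) :: L).flatMap fun p => [(p.1, true), (p.2, false)]) =
        (a, true) :: w ∧
      (∃ c w', w = (c, false) :: w' ∧ a < c) ∧
      ((a, true) :: w).getLast? = some ((L.getLastD (a, b)).2, false) ∧
      (w.length = 1 → List.Chain' (fun p q : Fin n × Fin n => p.2 = q.1) ((a, b) :: L)) := by
  induction L with
  | nil =>
    intro a b hab _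
    refine ⟨[(b, false)], ?_, ⟨b, [], rfl, hab⟩, by simp, by simp [List.Chain']⟩
    simp [FreeGroup.reduce.cons, FreeGroup.reduce_singleton, hab.ne]
  | cons p L' ih =>
    obtain ⟨a', b'⟩ := p
    intro a b hab hL
    have ha'b' : a' < b' := hL (a', b') List.mem_cons_self
    obtain ⟨w', hw', ⟨c', w'', hwc, hac⟩, hlast', hchain'⟩ :=
      ih a' b' ha'b' (fun p hp => hL p (by simp [hp]))
    have hW : (((a, b) :: (a', b') :: L').flatMap fun p => [(p.1, true), (p.2, false)]) =
        (a, true) :: (b, false) ::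
          (((a', b') :: L').flatMap fun p => [(p.1, true), (p.2, false)]) := by
      simp
    rw [hW]
    by_cases hba' : b = a'
    · have h1 : FreeGroup.reduce ((b, false) ::
          (((a', b') :: L').flatMap fun p => [(p.1, true), (p.2, false)])) = w' := by
        rw [FreeGroup.reduce.cons, hw']
        simp [hba']
      have hac' : a < c' := lt_trans (hba' ▸ hab) hac
      have h2 : FreeGroup.reduce ((a, true) :: (b, false) ::
          (((a', b') :: L').flatMap fun p => [(p.1, true), (p.2, false)])) = (a, true) :: w' := by
        rw [FreeGroup.reduce.cons, h1, hwc]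
        simp [hac'.ne]
      refine ⟨w', h2, ⟨c', w'', hwc, hac'⟩, ?_, ?_⟩
      · rw [hwc] at hlast' ⊢
        simpa [List.getLast?_cons_cons, List.getLast?_cons, List.getLastD_cons] using hlast'
      · intro hlen
        rw [List.Chain', List.isChain_cons_cons]
        exact ⟨hba', hchain' hlen⟩
    · have h1 : FreeGroup.reduce ((b, false) ::
          (((a', b') :: L').flatMap fun p => [(p.1, true), (p.2, false)])) =
          (b, false) :: (a', true) :: w' := by
        rw [FreeGroup.reduce.cons, hw']
        simp [hba']
      have h2 : FreeGroup.reduce ((a, true) :: (b, false) ::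
          (((a', b') :: L').flatMap fun p => [(p.1, true), (p.2, false)])) =
          (a, true) :: (b, false) :: (a', true) :: w' := by
        rw [FreeGroup.reduce.cons, h1]
        simp [hab.ne]
      refine ⟨(b, false) :: (a', true) :: w', h2, ⟨b, (a', true) :: w', rfl, hab⟩, ?_, ?_⟩
      · rw [hwc] at hlast' ⊢
        simpa [List.getLast?_cons_cons, List.getLast?_cons, List.getLastD_cons] using hlast'
      · intro hlen
        simp at hlen

/-- In a free group with basis `v₁, …, v_n` (modeled as `FreeGroup (Fin n)` with
`v_j = FreeGroup.of j`), if `o, t : {1,…,k} → {1,…,n}` satisfy `o(j) < t(j)` for all `j`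
and `(v_{o(1)} v_{t(1)}⁻¹) ⋯ (v_{o(k)} v_{t(k)}⁻¹) = v₁ v_n⁻¹`, then `o(1) = 1`,
`t(k) = n`, and `t(j) = o(j+1)` for `1 ≤ j ≤ k-1`. -/
theorem free_group_path_detection (n k : ℕ) (hn : 2 ≤ n) (hk : 1 ≤ k)
    (o t : Fin k → Fin n) (hot : ∀ j, o j < t j)
    (hp : (List.ofFn fun j => FreeGroup.of (o j) * (FreeGroup.of (t j))⁻¹).prod =
      FreeGroup.of (⟨0, by omega⟩ : Fin n) * (FreeGroup.of (⟨n - 1, by omega⟩ : Fin n))⁻¹) :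
    o ⟨0, by omega⟩ = (⟨0, by omega⟩ : Fin n) ∧
    t ⟨k - 1, by omega⟩ = (⟨n - 1, by omega⟩ : Fin n) ∧
    ∀ (j : ℕ) (hj : j + 1 < k), t ⟨j, by omega⟩ = o ⟨j + 1, hj⟩ := by
  obtain ⟨k', rfl⟩ : ∃ m, k = m + 1 := ⟨k - 1, by omega⟩
  set z : Fin n := ⟨0, by omega⟩
  set m : Fin n := ⟨n - 1, by omega⟩
  set P : List (Fin n × Fin n) := List.ofFn fun j => (o j, t j) with hP
  set L : List (Fin n × Fin n) := List.ofFn fun i : Fin k' => (o i.succ, t i.succ) with hL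
  have hPc : P = (o 0, t 0) :: L := by rw [hP, hL, List.ofFn_succ]
  have hW : (List.ofFn fun j => FreeGroup.of (o j) * (FreeGroup.of (t j))⁻¹).prod =
      FreeGroup.mk (P.flatMap fun p => [(p.1, true), (p.2, false)]) := by
    have h : (List.ofFn fun j => FreeGroup.of (o j) * (FreeGroup.of (t j))⁻¹) =
        List.map FreeGroup.mk (List.ofFn fun j => [(o j, true), (t j, false)]) := by
      rw [List.map_ofFn]
      exact congrArg _ (funext fun j => fg_of_mul_of_inv _ _)
    rw [h, fg_prod_map_mk]
    congr 1
    rw [hP, List.flatMap_def, List.map_ofFn]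
    rfl
  rw [hW, fg_of_mul_of_inv] at hp
  have hred : FreeGroup.reduce (P.flatMap fun p => [(p.1, true), (p.2, false)]) =
      [(z, true), (m, false)] := by
    have h := congrArg FreeGroup.toWord hp
    rw [FreeGroup.toWord_mk, FreeGroup.toWord_mk] at h
    rw [h]
    have hzm : z ≠ m := fun h => by
      have : (0 : ℕ) = n - 1 := congrArg Fin.val h
      omega
    simp [FreeGroup.reduce.cons, FreeGroup.reduce_singleton, hzm]
  obtain ⟨w, hw, ⟨c, w', hwc, hac⟩, hlast, hchain⟩ :=
    fg_core L (o 0) (t 0) (hot 0) (by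
      intro p hp'
      rw [hL] at hp'
      obtain ⟨i, rfl⟩ := List.mem_ofFn.mp hp'
      exact hot i.succ)
  rw [← hPc, hred] at hw
  have ho0 : o 0 = z := (congrArg Prod.fst (List.head_eq_of_cons_eq hw)).symm
  have hwm : w = [(m, false)] := (List.tail_eq_of_cons_eq hw).symm
  have hteq : (L.getLastD (o 0, t 0)).2 = m := by
    rw [hwm] at hlast
    exact (by simpa using hlast : m = (L.getLastD (o 0, t 0)).2).symm
  refine ⟨?_, ?_, ?_⟩
  · have h0 : (⟨0, by omega⟩ : Fin (k' + 1)) = 0 := by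
      apply Fin.ext; simp
    rw [h0, ho0]
  · have h1 : P.getLast? = some (L.getLastD (o 0, t 0)) := by
      rw [hPc, List.getLast?_eq_getLast (List.cons_ne_nil _ _), ← fg_getLastD_cons]
    have h2 : P.getLast? = some (o ⟨k', by omega⟩, t ⟨k', by omega⟩) := by
      have := fg_getLast?_ofFn (fun j : Fin (k' + 1) => (o j, t j))
      exact this
    rw [h1] at h2
    have h3 : L.getLastD (o 0, t 0) = (o ⟨k', by omega⟩, t ⟨k', by omega⟩) :=
      Option.some_injective _ h2
    have h4 : t ⟨k', by omega⟩ = m := by rw [h3] at hteq; exact hteq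
    simpa using h4
  · intro j hj
    have hchain2 : List.Chain' (fun p q : Fin n × Fin n => p.2 = q.1)
        (List.ofFn fun j => (o j, t j)) := by
      rw [List.ofFn_succ]
      exact hchain (by simp [hwm])
    rw [List.Chain', List.isChain_iff_getElem] at hchain2
    have hstep := hchain2 j (by simp; omega)
    rw [List.getElem_ofFn, List.getElem_ofFn] at hstep
    exact hstep
end
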